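/- Let μ > 0, Υ > 0, τ > 0, and choose γ > 0 with γ(γ+1) < μ/Υ². Suppose u, v, r are positive C² functions on [τ, ∞) with r nondecreasing, u(t) → 0 and v(t) → 0 as t → ∞, and satisfying the differential inequalities ü + 2(ṙ/r) u̇ ≤ (γ(γ+1)/t²) u and v̈ + 2(ṙ/r) v̇ ≥ (μ/(Υ² t²)) v on [τ, ∞). Then u(t) ≥ (u(τ)/v(τ)) v(t) for all t ≥ τ. -/

import Mathlib

open Set Filter Topology

/-- At an interior minimum, the second derivative is nonnegative. -/
lemma second_deriv_nonneg_at_min {w w' : ℝ → ℝ} {a b s d : ℝ}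
    (hw : ∀ t ∈ Set.Icc a b, HasDerivAt w (w' t) t)
    (hw' : HasDerivAt w' d s)
    (hmin : IsMinOn w (Set.Icc a b) s)
    (hs : s ∈ Set.Ioo a b)
    (hw's : w' s = 0) : 0 ≤ d := by
  by_contra hneg
  push_neg at hneg
  have hslope : Filter.Tendsto (slope w' s) (𝓝[≠] s) (𝓝 d) :=
    hasDerivAt_iff_tendsto_slope.mp hw'
  have h1 : ∀ᶠ t in 𝓝[>] s, slope w' s t < 0 :=
    (hslope.mono_left (nhdsWithin_mono _ (fun x hx => ne_of_gt hx))).eventually_lt_const hneg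
  have h2 : ∀ᶠ t in 𝓝[>] s, t < b :=
    nhdsWithin_le_nhds (Iio_mem_nhds hs.2)
  obtain ⟨m, hm, hIoo⟩ := mem_nhdsGT_iff_exists_Ioo_subset.mp (h1.and h2)
  set x := (s + m) / 2 with hx
  have hxmem : x ∈ Set.Ioo s m := by constructor <;> simp only [hx] <;> [linarith [hm.out]; linarith [hm.out]]
  have hxb : x < b := (hIoo hxmem).2
  have hsub : Set.Icc s x ⊆ Set.Icc a b := fun t ht =>
    ⟨le_trans hs.1.le ht.1, le_trans ht.2 hxb.le⟩
  have hanti : StrictAntiOn w (Set.Icc s x) := by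
    apply strictAntiOn_of_deriv_neg (convex_Icc _ _)
    · exact fun t ht => ((hw t (hsub ht)).continuousAt).continuousWithinAt
    · intro t ht
      rw [interior_Icc] at ht
      have htm : t ∈ Set.Ioo s m := ⟨ht.1, lt_trans ht.2 hxmem.2⟩
      have hsl := (hIoo htm).1
      rw [slope_def_field] at hsl
      have hts : 0 < t - s := by linarith [ht.1]
      have hwt : w' t < 0 := by
        rw [hw's, sub_zero] at hsl
        rcases div_neg_iff.mp hsl with ⟨_, h⟩ | ⟨h, _⟩
        · linarith
        · exact h
      rw [(hw t (hsub ⟨ht.1.le, ht.2.le⟩)).deriv]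
      exact hwt
  have hxgt : s < x := hxmem.1
  have hlt : w x < w s := hanti ⟨le_rfl, hxgt.le⟩ ⟨hxgt.le, le_rfl⟩ hxgt
  have : w s ≤ w x := hmin (hsub ⟨hxgt.le, le_rfl⟩)
  linarith

theorem stmt_17 (μ Υ τ γ : ℝ) (hμ : 0 < μ) (hΥ : 0 < Υ) (hτ : 0 < τ) (hγ : 0 < γ)
    (hcomp : γ * (γ + 1) < μ / Υ ^ 2)
    (u u' u'' v v' v'' r r' : ℝ → ℝ)
    (hu : ∀ t ∈ Set.Ici τ, HasDerivAt u (u' t) t)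
    (hu' : ∀ t ∈ Set.Ici τ, HasDerivAt u' (u'' t) t)
    (hv : ∀ t ∈ Set.Ici τ, HasDerivAt v (v' t) t)
    (hv' : ∀ t ∈ Set.Ici τ, HasDerivAt v' (v'' t) t)
    (hrder : ∀ t ∈ Set.Ici τ, HasDerivAt r (r' t) t)
    (hupos : ∀ t ∈ Set.Ici τ, 0 < u t)
    (hvpos : ∀ t ∈ Set.Ici τ, 0 < v t)
    (hrpos : ∀ t ∈ Set.Ici τ, 0 < r t)
    (hrmono : ∀ t ∈ Set.Ici τ, 0 ≤ r' t)
    (hu0 : Filter.Tendsto u Filter.atTop (nhds 0))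
    (hv0 : Filter.Tendsto v Filter.atTop (nhds 0))
    (hineq_u : ∀ t ∈ Set.Ici τ,
      u'' t + 2 * (r' t / r t) * u' t ≤ (γ * (γ + 1) / t ^ 2) * u t)
    (hineq_v : ∀ t ∈ Set.Ici τ,
      v'' t + 2 * (r' t / r t) * v' t ≥ (μ / (Υ ^ 2 * t ^ 2)) * v t) :
    ∀ t ∈ Set.Ici τ, u t ≥ (u τ / v τ) * v t := by
  set c : ℝ := u τ / v τ with hc
  have hcpos : 0 < c := div_pos (hupos τ (Set.mem_Ici.mpr le_rfl)) (hvpos τ (Set.mem_Ici.mpr le_rfl))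
  set w : ℝ → ℝ := fun t => u t - c * v t with hwdef
  set w' : ℝ → ℝ := fun t => u' t - c * v' t with hw'def
  set w'' : ℝ → ℝ := fun t => u'' t - c * v'' t with hw''def
  have hw : ∀ t ∈ Set.Ici τ, HasDerivAt w (w' t) t :=
    fun t ht => (hu t ht).sub ((hv t ht).const_mul c)
  have hwd : ∀ t ∈ Set.Ici τ, HasDerivAt w' (w'' t) t :=
    fun t ht => (hu' t ht).sub ((hv' t ht).const_mul c)
  clear_value w w' w''
  have hwτ : w τ = 0 := by
    have hv0' : v τ ≠ 0 := ne_of_gt (hvpos τ (Set.mem_Ici.mpr le_rfl))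
    simp only [hwdef, hc]
    field_simp
    ring
  have hw0 : Filter.Tendsto w Filter.atTop (nhds 0) := by
    have h := hu0.sub (hv0.const_mul c)
    rw [hwdef]
    simpa using h
  intro t₀ ht₀
  by_contra hlt
  push_neg at hlt
  have hwneg : w t₀ < 0 := by simp only [hwdef]; linarith
  obtain ⟨T₁, hT₁⟩ := Filter.eventually_atTop.mp
    (hw0.eventually_const_lt (show w t₀ / 2 < 0 by linarith))
  set T : ℝ := max T₁ t₀ with hT
  have hτT : τ ≤ T := le_trans ht₀ (le_max_right _ _)
  have ht₀T : t₀ ≤ T := le_max_right _ _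
  have hcont : ContinuousOn w (Set.Icc τ T) :=
    fun t ht => ((hw t ht.1).continuousAt).continuousWithinAt
  obtain ⟨s, hsmem, hmin⟩ := isCompact_Icc.exists_isMinOn (Set.nonempty_Icc.mpr hτT) hcont
  have hminle : ∀ x ∈ Set.Icc τ T, w s ≤ w x := fun x hx => hmin hx
  have hst₀ : w s ≤ w t₀ := hminle t₀ ⟨ht₀, ht₀T⟩
  have hsτ : τ < s := by
    rcases lt_or_eq_of_le hsmem.1 with h | h
    · exact h
    · exfalso; rw [← h, hwτ] at hst₀; linarith
  have hsT : s < T := by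
    rcases lt_or_eq_of_le hsmem.2 with h | h
    · exact h
    · exfalso
      have h2 := hT₁ T (le_max_left _ _)
      rw [h] at hst₀
      linarith [hst₀, h2, hwneg]
  have hsIci : s ∈ Set.Ici τ := hsmem.1
  -- w' s = 0
  have hlocmin : IsLocalMin w s := hmin.isLocalMin (Icc_mem_nhds hsτ hsT)
  have hw's : w' s = 0 := hlocmin.hasDerivAt_eq_zero (hw s hsIci)
  -- second derivative nonneg
  have hw''s : 0 ≤ w'' s :=
    second_deriv_nonneg_at_min (fun t ht => hw t ht.1) (hwd s hsIci) hmin ⟨hsτ, hsT⟩ hw's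
  -- derive contradiction
  have hs0 : 0 < s := lt_trans hτ hsτ
  have hs2 : (0:ℝ) < s ^ 2 := by positivity
  have hA := hineq_u s hsIci
  have hB := hineq_v s hsIci
  have hD : u s < c * v s := by
    have : w s < 0 := lt_of_le_of_lt hst₀ hwneg
    simp only [hwdef] at this; linarith
  have hC' : u' s = c * v' s := by simp only [hw'def] at hw's; linarith
  have hE : 0 ≤ u'' s - c * v'' s := by simpa [hw''def] using hw''s
  have hcB : c * (v'' s + 2 * (r' s / r s) * v' s) ≥ c * ((μ / (Υ ^ 2 * s ^ 2)) * v s) :=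
    mul_le_mul_of_nonneg_left hB hcpos.le
  have hkey : 2 * (r' s / r s) * u' s = 2 * (r' s / r s) * (c * v' s) := by rw [hC']
  have hH : 0 ≤ (γ * (γ + 1) / s ^ 2) * u s - c * ((μ / (Υ ^ 2 * s ^ 2)) * v s) := by
    nlinarith [hA, hcB, hkey, hE]
  have hKpos : 0 < γ * (γ + 1) / s ^ 2 := by positivity
  have h1 : γ * (γ + 1) / s ^ 2 < μ / (Υ ^ 2 * s ^ 2) := by
    rw [show μ / (Υ ^ 2 * s ^ 2) = (μ / Υ ^ 2) / s ^ 2 by ring]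
    gcongr
  have hvs : 0 < v s := hvpos s hsIci
  nlinarith [mul_lt_mul_of_pos_left hD hKpos, mul_pos hcpos hvs,
    mul_lt_mul_of_pos_right h1 (mul_pos hcpos hvs)]
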